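/- (Necessity for finite second moments) Let $(A_t)$, $(B_t)$ be as in the generalized autoregression with nonnegative entries, and suppose $\rho\big(E[A_0^{\otimes 2}]\big) \geq 1$ and $E[B_0^{\otimes 2}]$ has all coordinates strictly positive. Then the series $\sum_{k=0}^{\infty}\big(E[A_0^{\otimes 2}]\big)^k E[B_0^{\otimes 2}]$ diverges (in at least one coordinate), and hence no strictly stationary solution $Y_t$ of $Y_t = A_t Y_{t-1} + B_t$ can satisfy $E[\|Y_t\|^2]<\infty$. -/

import Mathlib

open MeasureTheory ProbabilityTheory Matrix Filter Topology

/-- Matrices carry the product (Borel) measurable structure. -/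
instance matrixMeasurableSpace {m n : Type*} {α : Type*} [MeasurableSpace α] :
    MeasurableSpace (Matrix m n α) :=
  (inferInstance : MeasurableSpace (m → n → α))

/-- The `r`-fold Kronecker power `M^{⊗r}` of a square matrix. -/
noncomputable def kronPow {n : ℕ} (M : Matrix (Fin n) (Fin n) ℝ) :
    (r : ℕ) → Matrix (Fin (n ^ r)) (Fin (n ^ r)) ℝ
  | 0 => 1
  | r + 1 =>
    Matrix.reindex (finProdFinEquiv.trans (finCongr (pow_succ n r).symm))
      (finProdFinEquiv.trans (finCongr (pow_succ n r).symm))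
      (Matrix.kroneckerMap (· * ·) (kronPow M r) M)

/-- The `r`-fold Kronecker power `v^{⊗r}` of a vector. -/
noncomputable def kronPowVec {n : ℕ} (v : Fin n → ℝ) :
    (r : ℕ) → Fin (n ^ r) → ℝ
  | 0 => fun _ => 1
  | r + 1 => fun i =>
    kronPowVec v r ((finProdFinEquiv.trans (finCongr (pow_succ n r).symm)).symm i).1 *
      v ((finProdFinEquiv.trans (finCongr (pow_succ n r).symm)).symm i).2

/-- `prodA A t ω k = A_t(ω) A_{t-1}(ω) ⋯ A_{t-k+1}(ω)` (`k` factors); the empty product is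
the identity. -/
noncomputable def prodA {n : ℕ} {Ω : Type*} (A : ℤ → Ω → Matrix (Fin n) (Fin n) ℝ)
    (t : ℤ) (ω : Ω) : ℕ → Matrix (Fin n) (Fin n) ℝ
  | 0 => 1
  | k + 1 => prodA A t ω k * A (t - k) ω

lemma matPow_nonneg {N : ℕ} {M : Matrix (Fin N) (Fin N) ℝ} (hM : ∀ i j, 0 ≤ M i j) :
    ∀ k i j, 0 ≤ (M ^ k) i j := by
  intro k
  induction k with
  | zero =>
    intro i j
    rw [pow_zero, Matrix.one_apply]
    split <;> norm_num
  | succ k ih =>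
    intro i j
    rw [pow_succ, Matrix.mul_apply]
    exact Finset.sum_nonneg fun l _ => mul_nonneg (ih i l) (hM l j)

lemma part1 {N : ℕ} (M : Matrix (Fin N) (Fin N) ℝ) (v : Fin N → ℝ)
    (hM : ∀ i j, 0 ≤ M i j) (hv : ∀ i, 0 < v i)
    (hspec : ∃ z ∈ spectrum ℂ (M.map (algebraMap ℝ ℂ)), 1 ≤ ‖z‖) :
    ∃ i, ¬ Summable fun k => ((M ^ k) *ᵥ v) i := by
  by_contra hcon
  push_neg at hcon
  rcases Nat.eq_zero_or_pos N with hN | hN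
  · subst hN
    obtain ⟨z, hz, -⟩ := hspec
    rw [spectrum.mem_iff] at hz
    exact hz (isUnit_of_subsingleton _)
  haveI : Nonempty (Fin N) := ⟨⟨0, hN⟩⟩
  -- setup
  have hterm : ∀ k i, 0 ≤ ((M ^ k) *ᵥ v) i := by
    intro k i
    simp only [Matrix.mulVec, dotProduct]
    exact Finset.sum_nonneg fun j _ => mul_nonneg (matPow_nonneg hM k i j) (hv j).le
  set S : Fin N → ℝ := fun i => ∑' k, ((M ^ k) *ᵥ v) i with hS
  have hvS : ∀ i, v i ≤ S i := by
    intro i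
    have := Summable.le_tsum (hcon i) 0 (fun j _ => hterm j i)
    simpa [Matrix.one_mulVec] using this
  have hSpos : ∀ i, 0 < S i := fun i => lt_of_lt_of_le (hv i) (hvS i)
  have hMS : ∀ i, (M *ᵥ S) i = S i - v i := by
    intro i
    have h1 : (M *ᵥ S) i = ∑' k, ((M ^ (k + 1)) *ᵥ v) i := by
      rw [Matrix.mulVec, dotProduct]
      have : ∀ j, M i j * S j = ∑' k, M i j * ((M ^ k) *ᵥ v) j := by
        intro j; rw [tsum_mul_left]
      simp_rw [this]
      rw [← Summable.tsum_finsetSum (fun j _ => (hcon j).mul_left (M i j))]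
      congr 1
      ext k
      have : ((M ^ (k + 1)) *ᵥ v) i = (M *ᵥ ((M ^ k) *ᵥ v)) i := by
        rw [Matrix.mulVec_mulVec, ← pow_succ']
      rw [this, Matrix.mulVec, dotProduct]
    rw [h1]
    have h2 := Summable.tsum_eq_zero_add (hcon i)
    simp only [pow_zero, Matrix.one_mulVec] at h2
    rw [hS]; simp only []
    rw [h2]; ring
  -- contraction constant
  set ε : ℝ := Finset.univ.inf' Finset.univ_nonempty (fun i => v i / S i) with hε
  have hεpos : 0 < ε := by
    rw [hε, Finset.lt_inf'_iff]
    exact fun i _ => div_pos (hv i) (hSpos i)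
  set c : ℝ := 1 - ε with hc
  have hc1 : c < 1 := by rw [hc]; linarith
  have hc0 : 0 ≤ c := by
    have : ε ≤ v ⟨0, hN⟩ / S ⟨0, hN⟩ := Finset.inf'_le _ (Finset.mem_univ _)
    have h2 : v ⟨0, hN⟩ / S ⟨0, hN⟩ ≤ 1 := by
      rw [div_le_one (hSpos _)]; exact hvS _
    rw [hc]; linarith
  have hMSc : ∀ i, (M *ᵥ S) i ≤ c * S i := by
    intro i
    have h1 : ε ≤ v i / S i := Finset.inf'_le _ (Finset.mem_univ _)
    have h2 : ε * S i ≤ v i := (le_div_iff₀ (hSpos i)).1 h1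
    rw [hMS i, hc]; nlinarith [hSpos i]
  -- eigenvector
  obtain ⟨z, hz, hz1⟩ := hspec
  rw [spectrum.mem_iff] at hz
  rw [Matrix.isUnit_iff_isUnit_det, isUnit_iff_ne_zero, not_not] at hz
  obtain ⟨x, hx0, hxz⟩ := (Matrix.exists_mulVec_eq_zero_iff).2 hz
  have hMx : (M.map (algebraMap ℝ ℂ)) *ᵥ x = z • x := by
    have : (algebraMap ℂ (Matrix (Fin N) (Fin N) ℂ)) z = z • 1 := by
      rw [Algebra.algebraMap_eq_smul_one]
    rw [this] at hxz
    have := hxz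
    rw [Matrix.sub_mulVec, Matrix.smul_mulVec, Matrix.one_mulVec, sub_eq_zero] at this
    exact this.symm
  set y : Fin N → ℝ := fun i => ‖x i‖ with hy
  have hynn : ∀ i, 0 ≤ y i := fun i => norm_nonneg _
  have h1 : ∀ i, ‖z‖ * y i ≤ (M *ᵥ y) i := by
    intro i
    have := congrFun hMx i
    have heq : ‖z‖ * y i = ‖(z • x) i‖ := by simp [hy, norm_smul]
    rw [heq, ← this, Matrix.mulVec, dotProduct]
    calc ‖∑ j, M.map (algebraMap ℝ ℂ) i j * x j‖
        ≤ ∑ j, ‖M.map (algebraMap ℝ ℂ) i j * x j‖ := norm_sum_le _ _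
      _ = ∑ j, M i j * y j := by
          apply Finset.sum_congr rfl
          intro j _
          rw [norm_mul, Matrix.map_apply]
          simp only [hy]
          congr 1
          have : ((algebraMap ℝ ℂ) (M i j)) = ((M i j : ℝ) : ℂ) := rfl
          rw [this, Complex.norm_real, Real.norm_eq_abs, abs_of_nonneg (hM i j)]
      _ = (M *ᵥ y) i := rfl
  have hmonoPow : ∀ k (u w : Fin N → ℝ), (∀ i, u i ≤ w i) →
      ∀ i, ((M ^ k) *ᵥ u) i ≤ ((M ^ k) *ᵥ w) i := by
    intro k
    induction k with
    | zero => intro u w h i; simpa [Matrix.one_mulVec] using h i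
    | succ k ih =>
      intro u w h i
      have : ∀ i, (M *ᵥ u) i ≤ (M *ᵥ w) i := by
        intro i
        simp only [Matrix.mulVec, dotProduct]
        exact Finset.sum_le_sum fun j _ => mul_le_mul_of_nonneg_left (h j) (hM i j)
      have h2 := ih (M *ᵥ u) (M *ᵥ w) this i
      rw [Matrix.mulVec_mulVec, Matrix.mulVec_mulVec, ← pow_succ] at h2
      exact h2
  have h2 : ∀ k i, ‖z‖ ^ k * y i ≤ ((M ^ k) *ᵥ y) i := by
    intro k
    induction k with
    | zero => intro i; simp [Matrix.one_mulVec]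
    | succ k ih =>
      intro i
      have step : ((M ^ k) *ᵥ (‖z‖ • y)) i ≤ ((M ^ k) *ᵥ (M *ᵥ y)) i :=
        hmonoPow k _ _ (fun j => by simpa using h1 j) i
      have e1 : ((M ^ k) *ᵥ (‖z‖ • y)) i = ‖z‖ * ((M ^ k) *ᵥ y) i := by
        rw [Matrix.mulVec_smul]; simp
      have e2 : ((M ^ k) *ᵥ (M *ᵥ y)) i = ((M ^ (k + 1)) *ᵥ y) i := by
        rw [Matrix.mulVec_mulVec, ← pow_succ]
      calc ‖z‖ ^ (k + 1) * y i = ‖z‖ * (‖z‖ ^ k * y i) := by ring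
        _ ≤ ‖z‖ * ((M ^ k) *ᵥ y) i := by
            apply mul_le_mul_of_nonneg_left (ih i) (norm_nonneg z)
        _ = ((M ^ k) *ᵥ (‖z‖ • y)) i := e1.symm
        _ ≤ ((M ^ (k + 1)) *ᵥ y) i := e2 ▸ step
  have h3 : ∀ k i, ((M ^ k) *ᵥ S) i ≤ c ^ k * S i := by
    intro k
    induction k with
    | zero => intro i; simp [Matrix.one_mulVec]
    | succ k ih =>
      intro i
      have step : ((M ^ k) *ᵥ (M *ᵥ S)) i ≤ ((M ^ k) *ᵥ (c • S)) i :=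
        hmonoPow k _ _ (fun j => by simpa using hMSc j) i
      have e2 : ((M ^ k) *ᵥ (M *ᵥ S)) i = ((M ^ (k + 1)) *ᵥ S) i := by
        rw [Matrix.mulVec_mulVec, ← pow_succ]
      have e1 : ((M ^ k) *ᵥ (c • S)) i = c * ((M ^ k) *ᵥ S) i := by
        rw [Matrix.mulVec_smul]; simp
      calc ((M ^ (k + 1)) *ᵥ S) i = ((M ^ k) *ᵥ (M *ᵥ S)) i := e2.symm
        _ ≤ c * ((M ^ k) *ᵥ S) i := by rw [← e1]; exact step
        _ ≤ c * (c ^ k * S i) := mul_le_mul_of_nonneg_left (ih i) hc0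
        _ = c ^ (k + 1) * S i := by ring
  set C : ℝ := Finset.univ.sup' Finset.univ_nonempty (fun i => y i / S i) with hC
  have hC0 : 0 ≤ C := by
    have := Finset.le_sup' (fun i => y i / S i) (Finset.mem_univ (⟨0, hN⟩ : Fin N))
    exact le_trans (div_nonneg (hynn _) (hSpos _).le) this
  have hyCS : ∀ i, y i ≤ C * S i := by
    intro i
    have h := Finset.le_sup' (fun i => y i / S i) (Finset.mem_univ i)
    calc y i = y i / S i * S i := (div_mul_cancel₀ _ (hSpos i).ne').symm
      _ ≤ C * S i := mul_le_mul_of_nonneg_right h (hSpos i).le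
  have key : ∀ k i, y i ≤ C * (c ^ k * S i) := by
    intro k i
    calc y i = 1 * y i := (one_mul _).symm
      _ ≤ ‖z‖ ^ k * y i :=
          mul_le_mul_of_nonneg_right (one_le_pow₀ hz1) (hynn i)
      _ ≤ ((M ^ k) *ᵥ y) i := h2 k i
      _ ≤ ((M ^ k) *ᵥ (C • S)) i := hmonoPow k _ _ hyCS i
      _ = C * ((M ^ k) *ᵥ S) i := by rw [Matrix.mulVec_smul]; simp
      _ ≤ C * (c ^ k * S i) := mul_le_mul_of_nonneg_left (h3 k i) hC0
  obtain ⟨i0, hi0⟩ := Function.ne_iff.1 hx0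
  have hy0 : 0 < y i0 := by simpa [hy] using norm_pos_iff.2 hi0
  have htend : Tendsto (fun k => C * (c ^ k * S i0)) atTop (𝓝 0) := by
    have := tendsto_pow_atTop_nhds_zero_of_lt_one hc0 hc1
    have h2 := (this.mul_const (S i0)).const_mul C
    simpa using h2
  have := htend.eventually (eventually_lt_nhds hy0)
  obtain ⟨k, hk⟩ := this.exists
  exact absurd (key k i0) (not_le.2 hk)

namespace KronTwo

variable {n : ℕ}

def e0 : Fin (n ^ 0) × Fin n ≃ Fin (n ^ 1) :=
  finProdFinEquiv.trans (finCongr (pow_succ n 0).symm)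

def e1 : Fin (n ^ 1) × Fin n ≃ Fin (n ^ 2) :=
  finProdFinEquiv.trans (finCongr (pow_succ n 1).symm)

def kA (i : Fin (n ^ 2)) : Fin n := (e0.symm (e1.symm i).1).2

def kB (i : Fin (n ^ 2)) : Fin n := (e1.symm i).2

instance : Unique (Fin (n ^ 0)) where
  default := ⟨0, by simp⟩
  uniq a := by
    have h1 := a.isLt
    have h2 : n ^ 0 = 1 := pow_zero n
    ext
    show (a : ℕ) = (0 : ℕ)
    omega

def kE : Fin (n ^ 2) ≃ Fin n × Fin n :=
  e1.symm.trans (Equiv.prodCongr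
    (e0.symm.trans (Equiv.uniqueProd (Fin n) (Fin (n ^ 0)))) (Equiv.refl (Fin n)))

lemma kE_apply (i : Fin (n ^ 2)) : kE i = (kA i, kB i) := rfl

lemma sum_kron_eq (F : Fin n → Fin n → ℝ) :
    ∑ j : Fin (n ^ 2), F (kA j) (kB j) = ∑ a : Fin n, ∑ b : Fin n, F a b := by
  calc ∑ j : Fin (n ^ 2), F (kA j) (kB j) = ∑ p : Fin n × Fin n, F p.1 p.2 :=
        Fintype.sum_equiv kE _ _ fun j => rfl
    _ = ∑ a : Fin n, ∑ b : Fin n, F a b := Fintype.sum_prod_type _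

lemma kronPowVec_two (v : Fin n → ℝ) (i : Fin (n ^ 2)) :
    kronPowVec v 2 i = v (kA i) * v (kB i) := by
  simp [kronPowVec, kA, kB, e0, e1]

lemma kronPow_two (M : Matrix (Fin n) (Fin n) ℝ) (i j : Fin (n ^ 2)) :
    kronPow M 2 i j = M (kA i) (kA j) * M (kB i) (kB j) := by
  simp only [kronPow, Matrix.reindex_apply, Matrix.submatrix_apply, Matrix.kroneckerMap_apply]
  have hsub : ∀ x y : Fin (n ^ 0), (1 : Matrix (Fin (n ^ 0)) (Fin (n ^ 0)) ℝ) x y = 1 :=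
    fun x y => by rw [Subsingleton.elim x y, Matrix.one_apply_eq]
  rw [hsub, one_mul]
  rfl

lemma kE_injective : Function.Injective (fun i : Fin (n ^ 2) => (kA i, kB i)) := by
  intro i j h
  have : kE i = kE j := by rw [kE_apply, kE_apply]; exact h
  exact kE.injective this

lemma kronPow_one_two : kronPow (1 : Matrix (Fin n) (Fin n) ℝ) 2 = 1 := by
  ext i j
  rw [kronPow_two, Matrix.one_apply, Matrix.one_apply, Matrix.one_apply]
  by_cases h : i = j
  · subst h; simp
  · have : ¬(kA i = kA j ∧ kB i = kB j) := by
      intro ⟨h1, h2⟩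
      exact h (kE_injective (by rw [Prod.mk.injEq]; exact ⟨h1, h2⟩))
    rcases not_and_or.1 this with h1 | h1 <;> simp [h, h1] <;> tauto
  done

lemma kronPow_mul_two (M N : Matrix (Fin n) (Fin n) ℝ) :
    kronPow (M * N) 2 = kronPow M 2 * kronPow N 2 := by
  ext i j
  rw [kronPow_two, Matrix.mul_apply]
  simp only [kronPow_two, Matrix.mul_apply]
  rw [Finset.sum_mul_sum]
  rw [show (∑ l : Fin (n ^ 2), M (kA i) (kA l) * M (kB i) (kB l) *
      (N (kA l) (kA j) * N (kB l) (kB j)))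
      = ∑ a : Fin n, ∑ b : Fin n, M (kA i) a * M (kB i) b * (N a (kA j) * N b (kB j)) from
    sum_kron_eq (fun a b => M (kA i) a * M (kB i) b * (N a (kA j) * N b (kB j)))]
  apply Finset.sum_congr rfl
  intro a _
  apply Finset.sum_congr rfl
  intro b _
  ring

lemma kronPowVec_mulVec_two (M : Matrix (Fin n) (Fin n) ℝ) (u : Fin n → ℝ) :
    kronPowVec (M *ᵥ u) 2 = kronPow M 2 *ᵥ kronPowVec u 2 := by
  ext i
  rw [kronPowVec_two]
  simp only [Matrix.mulVec, dotProduct, kronPow_two, kronPowVec_two]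
  rw [Finset.sum_mul_sum]
  rw [show (∑ l : Fin (n ^ 2), M (kA i) (kA l) * M (kB i) (kB l) *
      (u (kA l) * u (kB l)))
      = ∑ a : Fin n, ∑ b : Fin n, M (kA i) a * M (kB i) b * (u a * u b) from
    sum_kron_eq (fun a b => M (kA i) a * M (kB i) b * (u a * u b))]
  apply Finset.sum_congr rfl
  intro a _
  apply Finset.sum_congr rfl
  intro b _
  ring

lemma measurable_entry (i j : Fin n) :
    Measurable (fun M : Matrix (Fin n) (Fin n) ℝ => M i j) :=
  (measurable_pi_apply j).comp (measurable_pi_apply i)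

lemma measurable_matrix_iff {α : Type*} [MeasurableSpace α]
    {f : α → Matrix (Fin n) (Fin n) ℝ} :
    Measurable f ↔ ∀ i j, Measurable fun x => f x i j := by
  rw [show Measurable f ↔ ∀ i, Measurable fun x => f x i from measurable_pi_iff]
  constructor
  · intro h i j
    exact (measurable_pi_apply j).comp (h i)
  · intro h i
    rw [measurable_pi_iff]
    exact h i

lemma measurable_mat_mul {α : Type*} [MeasurableSpace α]
    {f g : α → Matrix (Fin n) (Fin n) ℝ} (hf : Measurable f) (hg : Measurable g) :
    Measurable fun x => f x * g x := by
  rw [measurable_matrix_iff]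
  intro i j
  simp only [Matrix.mul_apply]
  exact Finset.measurable_sum _ fun l _ =>
    ((measurable_matrix_iff.1 hf i l).mul (measurable_matrix_iff.1 hg l j))

/-- ordered product of a tuple of matrices -/
noncomputable def mprod : ∀ k, (Fin k → Matrix (Fin n) (Fin n) ℝ) → Matrix (Fin n) (Fin n) ℝ
  | 0, _ => 1
  | k + 1, g => mprod k (fun j => g j.castSucc) * g (Fin.last k)

lemma measurable_mprod : ∀ k, Measurable (mprod (n := n) k)
  | 0 => measurable_const
  | k + 1 => by
    have h1 : Measurable fun g : Fin (k + 1) → Matrix (Fin n) (Fin n) ℝ =>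
        mprod k (fun j => g j.castSucc) :=
      (measurable_mprod k).comp (measurable_pi_lambda _ fun j => measurable_pi_apply _)
    exact measurable_mat_mul h1 (measurable_pi_apply _)

lemma prodA_eq_mprod {Ω : Type*} (A : ℤ → Ω → Matrix (Fin n) (Fin n) ℝ) (ω : Ω) :
    ∀ k, prodA A 0 ω k = mprod k (fun j : Fin k => A (-(j : ℤ)) ω)
  | 0 => rfl
  | k + 1 => by
    show prodA A 0 ω k * A (0 - (k : ℤ)) ω = _
    rw [prodA_eq_mprod A ω k]
    show _ = mprod k (fun j : Fin k => A (-((j.castSucc : Fin (k+1)) : ℤ)) ω) *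
      A (-((Fin.last k : Fin (k+1)) : ℤ)) ω
    simp only [Fin.coe_castSucc, Fin.val_last]
    norm_num

end KronTwo

open KronTwo in
/-- **Necessity for finite second moments.** If `ρ(E[A₀^{⊗2}]) ≥ 1` and
`E[B₀^{⊗2}]` has strictly positive coordinates, then the series
`∑_k (E[A₀^{⊗2}])^k E[B₀^{⊗2}]` diverges in some coordinate, and no (strictly) stationary
solution of `Y_t = A_t Y_{t-1} + B_t` can have `E[‖Y_t‖²] < ∞`. -/
theorem stmt19 {n : ℕ} {Ω : Type*} [MeasurableSpace Ω] (μ : Measure Ω) [IsProbabilityMeasure μ]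
    (A : ℤ → Ω → Matrix (Fin n) (Fin n) ℝ) (B : ℤ → Ω → Fin n → ℝ)
    (hmeas : ∀ t, Measurable fun ω => (A t ω, B t ω))
    (hindep : iIndepFun (fun t ω => (A t ω, B t ω)) μ)
    (hident : ∀ t, Measure.map (fun ω => (A t ω, B t ω)) μ
      = Measure.map (fun ω => (A 0 ω, B 0 ω)) μ)
    (hApos : ∀ t, ∀ᵐ ω ∂μ, ∀ i j, 0 ≤ A t ω i j)
    (hBpos : ∀ t, ∀ᵐ ω ∂μ, ∀ i, 0 ≤ B t ω i)
    (hAkronInt : ∀ i j, Integrable (fun ω => kronPow (A 0 ω) 2 i j) μ)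
    (hBkronInt : ∀ i, Integrable (fun ω => kronPowVec (B 0 ω) 2 i) μ)
    (hspec : ∃ z ∈ spectrum ℂ
      ((Matrix.of fun i j => ∫ ω, kronPow (A 0 ω) 2 i j ∂μ).map (algebraMap ℝ ℂ)), 1 ≤ ‖z‖)
    (hB2pos : ∀ i, 0 < ∫ ω, kronPowVec (B 0 ω) 2 i ∂μ) :
    (∃ i, ¬ Summable fun k =>
      (((Matrix.of fun i j => ∫ ω, kronPow (A 0 ω) 2 i j ∂μ) ^ k) *ᵥ
        fun i => ∫ ω, kronPowVec (B 0 ω) 2 i ∂μ) i) ∧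
    (∀ Y : ℤ → Ω → Fin n → ℝ, (∀ t, Measurable (Y t)) →
      (∀ t, ∀ᵐ ω ∂μ, ∀ i, 0 ≤ Y t ω i) →
      (∀ t, Measure.map (Y t) μ = Measure.map (Y 0) μ) →
      (∀ t, ∀ᵐ ω ∂μ, Y t ω = A t ω *ᵥ Y (t - 1) ω + B t ω) →
      ¬ Integrable (fun ω => ‖Y 0 ω‖ ^ 2) μ) := by

  set Mker : Matrix (Fin (n ^ 2)) (Fin (n ^ 2)) ℝ :=
    Matrix.of fun i j => ∫ ω, kronPow (A 0 ω) 2 i j ∂μ with hMker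
  set vker : Fin (n ^ 2) → ℝ := fun i => ∫ ω, kronPowVec (B 0 ω) 2 i ∂μ with hvker
  -- basic measurability
  have hA_meas : ∀ t, Measurable (A t) := fun t => measurable_fst.comp (hmeas t)
  have hB_meas : ∀ t, Measurable (B t) := fun t => measurable_snd.comp (hmeas t)
  have hkA_meas : ∀ (i l : Fin (n ^ 2)),
      Measurable fun P : Matrix (Fin n) (Fin n) ℝ => kronPow P 2 i l := by
    intro i l
    simp only [kronPow_two]
    exact (measurable_entry _ _).mul (measurable_entry _ _)
  have hkA_measP : ∀ (i l : Fin (n ^ 2)),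
      Measurable fun p : Matrix (Fin n) (Fin n) ℝ × (Fin n → ℝ) => kronPow p.1 2 i l :=
    fun i l => (hkA_meas i l).comp measurable_fst
  have hkB_measP : ∀ (l : Fin (n ^ 2)),
      Measurable fun p : Matrix (Fin n) (Fin n) ℝ × (Fin n → ℝ) => kronPowVec p.2 2 l := by
    intro l
    simp only [kronPowVec_two]
    exact (((measurable_pi_apply _).comp measurable_snd).mul
      ((measurable_pi_apply _).comp measurable_snd))
  -- identical distribution transfer
  have hident_int : ∀ (t : ℤ) (g : Matrix (Fin n) (Fin n) ℝ × (Fin n → ℝ) → ℝ),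
      Measurable g →
      (Integrable (fun ω => g (A 0 ω, B 0 ω)) μ → Integrable (fun ω => g (A t ω, B t ω)) μ) ∧
      ∫ ω, g (A t ω, B t ω) ∂μ = ∫ ω, g (A 0 ω, B 0 ω) ∂μ := by
    intro t g hg
    constructor
    · intro h
      have h2 : Integrable g (Measure.map (fun ω => (A 0 ω, B 0 ω)) μ) :=
        (integrable_map_measure hg.aestronglyMeasurable (hmeas 0).aemeasurable).2 h
      rw [← hident t] at h2
      exact (integrable_map_measure hg.aestronglyMeasurable (hmeas t).aemeasurable).1 h2
    · rw [← integral_map (hmeas t).aemeasurable hg.aestronglyMeasurable, hident t,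
        integral_map (hmeas 0).aemeasurable hg.aestronglyMeasurable]
  have hkAint : ∀ (t : ℤ) i j, Integrable (fun ω => kronPow (A t ω) 2 i j) μ :=
    fun t i j => (hident_int t _ (hkA_measP i j)).1 (hAkronInt i j)
  have hkAeq : ∀ (t : ℤ) i j, ∫ ω, kronPow (A t ω) 2 i j ∂μ = Mker i j :=
    fun t i j => (hident_int t _ (hkA_measP i j)).2
  have hkBint : ∀ (t : ℤ) l, Integrable (fun ω => kronPowVec (B t ω) 2 l) μ :=
    fun t l => (hident_int t _ (hkB_measP l)).1 (hBkronInt l)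
  have hkBeq : ∀ (t : ℤ) l, ∫ ω, kronPowVec (B t ω) 2 l ∂μ = vker l :=
    fun t l => (hident_int t _ (hkB_measP l)).2
  -- nonnegativity of Mker, vker
  have hMker_nonneg : ∀ i j, 0 ≤ Mker i j := by
    intro i j
    apply integral_nonneg_of_ae
    filter_upwards [hApos 0] with ω hω
    rw [kronPow_two]
    exact mul_nonneg (hω _ _) (hω _ _)
  -- independence
  have hindep_k : ∀ k : ℕ, IndepFun (fun ω => prodA A 0 ω k)
      (fun ω => (A (-(k : ℤ)) ω, B (-(k : ℤ)) ω)) μ := by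
    intro k
    set S : Finset ℤ := (Finset.range k).image (fun j : ℕ => -(j : ℤ)) with hSdef
    have hdisj : Disjoint S ({-(k : ℤ)} : Finset ℤ) := by
      simp only [hSdef, Finset.disjoint_singleton_right, Finset.mem_image, Finset.mem_range,
        not_exists]
      rintro j ⟨hj, h⟩
      omega
    have hbase := hindep.indepFun_finset S {-(k : ℤ)} hdisj hmeas
    have hmem : ∀ j : Fin k, -((j : ℕ) : ℤ) ∈ S := fun j =>
      Finset.mem_image.2 ⟨(j : ℕ), Finset.mem_range.2 j.isLt, rfl⟩
    have hΦ : Measurable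
        (fun h : S → Matrix (Fin n) (Fin n) ℝ × (Fin n → ℝ) =>
          mprod k (fun j : Fin k => (h ⟨-((j : ℕ) : ℤ), hmem j⟩).1)) :=
      (measurable_mprod k).comp
        (measurable_pi_lambda _ fun j => measurable_fst.comp (measurable_pi_apply _))
    have hΨ : Measurable
        (fun h : ({-(k : ℤ)} : Finset ℤ) → Matrix (Fin n) (Fin n) ℝ × (Fin n → ℝ) =>
          h ⟨-(k : ℤ), Finset.mem_singleton_self _⟩) := measurable_pi_apply _
    have hcomp := hbase.comp hΦ hΨ
    have he : (fun ω => prodA A 0 ω k)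
        = fun ω => mprod k (fun j : Fin k => A (-((j : ℕ) : ℤ)) ω) :=
      funext fun ω => prodA_eq_mprod A ω k
    rw [show (fun ω => prodA A 0 ω k)
        = fun ω => mprod k (fun j : Fin k => A (-((j : ℕ) : ℤ)) ω) from he]
    exact hcomp
  have hIndAA : ∀ (k : ℕ) i l a b,
      IndepFun (fun ω => kronPow (prodA A 0 ω k) 2 i l)
        (fun ω => kronPow (A (-(k : ℤ)) ω) 2 a b) μ :=
    fun k i l a b => (hindep_k k).comp (hkA_meas i l) (hkA_measP a b)
  have hIndAB : ∀ (k : ℕ) i l a,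
      IndepFun (fun ω => kronPow (prodA A 0 ω k) 2 i l)
        (fun ω => kronPowVec (B (-(k : ℤ)) ω) 2 a) μ :=
    fun k i l a => (hindep_k k).comp (hkA_meas i l) (hkB_measP a)
  -- first moments of products
  have key1 : ∀ k : ℕ, ∀ i j, Integrable (fun ω => kronPow (prodA A 0 ω k) 2 i j) μ ∧
      ∫ ω, kronPow (prodA A 0 ω k) 2 i j ∂μ = (Mker ^ k) i j := by
    intro k
    induction k with
    | zero =>
      intro i j
      have h0 : ∀ ω : Ω, kronPow (prodA A 0 ω 0) 2 i j = (1 : Matrix (Fin (n ^ 2)) (Fin (n ^ 2)) ℝ) i j := by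
        intro ω
        show kronPow (1 : Matrix (Fin n) (Fin n) ℝ) 2 i j = _
        rw [kronPow_one_two]
      simp only [h0]
      refine ⟨integrable_const _, ?_⟩
      rw [integral_const]
      simp
    | succ k ih =>
      intro i j
      have hfac : ∀ ω : Ω, kronPow (prodA A 0 ω (k + 1)) 2 i j
          = ∑ l, kronPow (prodA A 0 ω k) 2 i l * kronPow (A (-(k : ℤ)) ω) 2 l j := by
        intro ω
        show kronPow (prodA A 0 ω k * A ((0 : ℤ) - (k : ℕ)) ω) 2 i j = _
        rw [show ((0 : ℤ) - (k : ℕ)) = -(k : ℤ) by omega]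
        rw [kronPow_mul_two, Matrix.mul_apply]
      have hint : ∀ l : Fin (n ^ 2), Integrable
          (fun ω => kronPow (prodA A 0 ω k) 2 i l * kronPow (A (-(k : ℤ)) ω) 2 l j) μ :=
        fun l => (hIndAA k i l l j).integrable_mul (ih i l).1 (hkAint _ l j)
      constructor
      · simp only [hfac]
        exact integrable_finset_sum _ fun l _ => hint l
      · simp only [hfac]
        rw [integral_finset_sum _ fun l _ => hint l]
        have : ∀ l : Fin (n ^ 2), ∫ ω, kronPow (prodA A 0 ω k) 2 i l
            * kronPow (A (-(k : ℤ)) ω) 2 l j ∂μ = (Mker ^ k) i l * Mker l j := by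
          intro l
          have h := (hIndAA k i l l j).integral_mul_eq_mul_integral (ih i l).1.aestronglyMeasurable (hkAint _ l j).aestronglyMeasurable
          simp only [(ih i l).2, hkAeq] at h
          exact h
        simp only [this]
        rw [show Mker ^ (k + 1) = Mker ^ k * Mker from pow_succ Mker k, Matrix.mul_apply]
  have key2 : ∀ k : ℕ, ∀ i, Integrable
      (fun ω => (kronPow (prodA A 0 ω k) 2 *ᵥ kronPowVec (B (-(k : ℤ)) ω) 2) i) μ ∧
      ∫ ω, (kronPow (prodA A 0 ω k) 2 *ᵥ kronPowVec (B (-(k : ℤ)) ω) 2) i ∂μ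
        = ((Mker ^ k) *ᵥ vker) i := by
    intro k i
    have hfac : ∀ ω : Ω, (kronPow (prodA A 0 ω k) 2 *ᵥ kronPowVec (B (-(k : ℤ)) ω) 2) i
        = ∑ l, kronPow (prodA A 0 ω k) 2 i l * kronPowVec (B (-(k : ℤ)) ω) 2 l := by
      intro ω
      simp [Matrix.mulVec, dotProduct]
    have hint : ∀ l : Fin (n ^ 2), Integrable
        (fun ω => kronPow (prodA A 0 ω k) 2 i l * kronPowVec (B (-(k : ℤ)) ω) 2 l) μ :=
      fun l => (hIndAB k i l l).integrable_mul (key1 k i l).1 (hkBint _ l)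
    constructor
    · simp only [hfac]
      exact integrable_finset_sum _ fun l _ => hint l
    · simp only [hfac]
      rw [integral_finset_sum _ fun l _ => hint l]
      have : ∀ l : Fin (n ^ 2), ∫ ω, kronPow (prodA A 0 ω k) 2 i l
          * kronPowVec (B (-(k : ℤ)) ω) 2 l ∂μ = (Mker ^ k) i l * vker l := by
        intro l
        have h := (hIndAB k i l l).integral_mul_eq_mul_integral (key1 k i l).1.aestronglyMeasurable (hkBint _ l).aestronglyMeasurable
        simp only [(key1 k i l).2, hkBeq] at h
        exact h
      simp only [this]
      simp [Matrix.mulVec, dotProduct]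
  -- part 1
  have hpart1 : ∃ i, ¬ Summable fun k => ((Mker ^ k) *ᵥ vker) i :=
    part1 Mker vker hMker_nonneg hB2pos hspec
  refine ⟨hpart1, ?_⟩
  -- part 2
  intro Y hYmeas hYpos hYstat hYrec hInt
  -- a.e. structure
  have hae : ∀ᵐ ω ∂μ, ∀ t : ℤ, (∀ i j, 0 ≤ A t ω i j) ∧ (∀ i, 0 ≤ B t ω i) ∧
      (∀ i, 0 ≤ Y t ω i) ∧ Y t ω = A t ω *ᵥ Y (t - 1) ω + B t ω := by
    rw [ae_all_iff]
    intro t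
    filter_upwards [hApos t, hBpos t, hYpos t, hYrec t] with ω h1 h2 h3 h4
    exact ⟨h1, h2, h3, h4⟩
  have hexp : ∀ᵐ ω ∂μ, ∀ (m : ℕ) (a : Fin n),
      (∑ k ∈ Finset.range (m + 1), (prodA A 0 ω k *ᵥ B (-(k : ℤ)) ω) a) ≤ Y 0 ω a := by
    filter_upwards [hae] with ω hω
    have hA0 : ∀ t i j, 0 ≤ A t ω i j := fun t => (hω t).1
    have hB0 : ∀ t i, 0 ≤ B t ω i := fun t => (hω t).2.1
    have hY0 : ∀ t i, 0 ≤ Y t ω i := fun t => (hω t).2.2.1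
    have hrec : ∀ t, Y t ω = A t ω *ᵥ Y (t - 1) ω + B t ω := fun t => (hω t).2.2.2
    have hprodnn : ∀ k i j, 0 ≤ prodA A 0 ω k i j := by
      intro k
      induction k with
      | zero =>
        intro i j
        show (0 : ℝ) ≤ (1 : Matrix (Fin n) (Fin n) ℝ) i j
        rw [Matrix.one_apply]
        split <;> norm_num
      | succ k ih =>
        intro i j
        show (0 : ℝ) ≤ (prodA A 0 ω k * A ((0 : ℤ) - (k : ℕ)) ω) i j
        rw [Matrix.mul_apply]
        exact Finset.sum_nonneg fun l _ => mul_nonneg (ih i l) (hA0 _ l j)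
    have hexp2 : ∀ m : ℕ, Y 0 ω
        = (∑ k ∈ Finset.range (m + 1), prodA A 0 ω k *ᵥ B (-(k : ℤ)) ω)
          + prodA A 0 ω (m + 1) *ᵥ Y (-((m : ℤ) + 1)) ω := by
      intro m
      induction m with
      | zero =>
        rw [Finset.sum_range_one]
        have h := hrec 0
        rw [show ((0 : ℤ) - 1) = -((0 : ℤ) + 1) by omega] at h
        rw [show (-((0 : ℕ) : ℤ)) = (0 : ℤ) by omega]
        have hp0 : prodA A 0 ω 0 = 1 := rfl
        have hp1 : prodA A 0 ω 1 = A 0 ω := by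
          show prodA A 0 ω 0 * A ((0 : ℤ) - ((0 : ℕ) : ℤ)) ω = A 0 ω
          rw [hp0, one_mul]
          norm_num
        rw [hp0, hp1, Matrix.one_mulVec, h]
        rw [add_comm]
        norm_num
      | succ m ih =>
        have h := hrec (-((m : ℤ) + 1))
        rw [ih, h]
        rw [Matrix.mulVec_add, Matrix.mulVec_mulVec]
        have hp : prodA A 0 ω (m + 1) * A (-((m : ℤ) + 1)) ω = prodA A 0 ω (m + 2) := by
          have h2 : prodA A 0 ω (m + 2)
              = prodA A 0 ω (m + 1) * A ((0 : ℤ) - ((m + 1 : ℕ) : ℤ)) ω := rfl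
          rw [h2, show ((0 : ℤ) - ((m + 1 : ℕ) : ℤ)) = -((m : ℤ) + 1) by push_cast; ring]
        rw [hp]
        rw [Finset.sum_range_succ (n := m + 1)]
        rw [show (-(((m + 1 : ℕ)) : ℤ)) = -((m : ℤ) + 1) by push_cast; ring]
        rw [show (-((m : ℤ) + 1) - 1) = -((((m + 1 : ℕ)) : ℤ) + 1) by push_cast; ring]
        abel
    intro m a
    have h := hexp2 m
    have : Y 0 ω a = (∑ k ∈ Finset.range (m + 1), prodA A 0 ω k *ᵥ B (-(k : ℤ)) ω) a
        + (prodA A 0 ω (m + 1) *ᵥ Y (-((m : ℤ) + 1)) ω) a := by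
      rw [← Pi.add_apply, ← h]
    rw [this]
    have hrem : 0 ≤ (prodA A 0 ω (m + 1) *ᵥ Y (-((m : ℤ) + 1)) ω) a := by
      simp only [Matrix.mulVec, dotProduct]
      exact Finset.sum_nonneg fun l _ => mul_nonneg (hprodnn _ a l) (hY0 _ l)
    have hsum_apply : (∑ k ∈ Finset.range (m + 1), prodA A 0 ω k *ᵥ B (-(k : ℤ)) ω) a
        = ∑ k ∈ Finset.range (m + 1), (prodA A 0 ω k *ᵥ B (-(k : ℤ)) ω) a := by
      rw [Finset.sum_apply]
    rw [hsum_apply]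
    linarith
  -- kron domination
  have hkron_dom : ∀ᵐ ω ∂μ, ∀ (m : ℕ) (i : Fin (n ^ 2)),
      ∑ k ∈ Finset.range (m + 1),
        (kronPow (prodA A 0 ω k) 2 *ᵥ kronPowVec (B (-(k : ℤ)) ω) 2) i
      ≤ kronPowVec (Y 0 ω) 2 i := by
    filter_upwards [hexp, hae] with ω h1 h2
    intro m i
    have hA0 : ∀ t i j, 0 ≤ A t ω i j := fun t => (h2 t).1
    have hB0 : ∀ t i, 0 ≤ B t ω i := fun t => (h2 t).2.1
    have hY0 : ∀ t i, 0 ≤ Y t ω i := fun t => (h2 t).2.2.1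
    have hprodnn : ∀ k i j, 0 ≤ prodA A 0 ω k i j := by
      intro k
      induction k with
      | zero =>
        intro i j
        show (0 : ℝ) ≤ (1 : Matrix (Fin n) (Fin n) ℝ) i j
        rw [Matrix.one_apply]; split <;> norm_num
      | succ k ih =>
        intro i j
        show (0 : ℝ) ≤ (prodA A 0 ω k * A ((0 : ℤ) - (k : ℕ)) ω) i j
        rw [Matrix.mul_apply]
        exact Finset.sum_nonneg fun l _ => mul_nonneg (ih i l) (hA0 _ l j)
    set u : ℕ → Fin n → ℝ := fun k => prodA A 0 ω k *ᵥ B (-(k : ℤ)) ω with hu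
    have hunn : ∀ k a, 0 ≤ u k a := by
      intro k a
      simp only [hu, Matrix.mulVec, dotProduct]
      exact Finset.sum_nonneg fun l _ => mul_nonneg (hprodnn _ a l) (hB0 _ l)
    have hsum_le : ∀ a, ∑ k ∈ Finset.range (m + 1), u k a ≤ Y 0 ω a := fun a => h1 m a
    calc ∑ k ∈ Finset.range (m + 1),
          (kronPow (prodA A 0 ω k) 2 *ᵥ kronPowVec (B (-(k : ℤ)) ω) 2) i
        = ∑ k ∈ Finset.range (m + 1), kronPowVec (u k) 2 i := by
          refine Finset.sum_congr rfl fun k _ => ?_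
          rw [hu]
          rw [kronPowVec_mulVec_two]
      _ = ∑ k ∈ Finset.range (m + 1), u k (kA i) * u k (kB i) := by
          refine Finset.sum_congr rfl fun k _ => ?_
          rw [kronPowVec_two]
      _ ≤ (∑ k ∈ Finset.range (m + 1), u k (kA i)) * (∑ k ∈ Finset.range (m + 1), u k (kB i)) := by
          rw [Finset.sum_mul_sum]
          refine Finset.sum_le_sum fun k hk => ?_
          exact Finset.single_le_sum (f := fun l => u k (kA i) * u l (kB i))
            (fun l _ => mul_nonneg (hunn k _) (hunn l _)) hk
      _ ≤ Y 0 ω (kA i) * Y 0 ω (kB i) := by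
          refine mul_le_mul (hsum_le _) (hsum_le _) ?_ (hY0 0 _)
          exact Finset.sum_nonneg fun k _ => hunn k _
      _ = kronPowVec (Y 0 ω) 2 i := (kronPowVec_two _ _).symm
  -- integrability of kron of Y
  have hY2int : ∀ i : Fin (n ^ 2), Integrable (fun ω => kronPowVec (Y 0 ω) 2 i) μ := by
    intro i
    have hmeasY : Measurable fun ω => kronPowVec (Y 0 ω) 2 i := by
      simp only [kronPowVec_two]
      exact ((measurable_pi_apply _).comp (hYmeas 0)).mul
        ((measurable_pi_apply _).comp (hYmeas 0))
    refine hInt.mono hmeasY.aestronglyMeasurable ?_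
    filter_upwards with ω
    rw [kronPowVec_two]
    calc ‖Y 0 ω (kA i) * Y 0 ω (kB i)‖ = ‖Y 0 ω (kA i)‖ * ‖Y 0 ω (kB i)‖ := norm_mul _ _
      _ ≤ ‖Y 0 ω‖ * ‖Y 0 ω‖ :=
          mul_le_mul (norm_le_pi_norm _ _) (norm_le_pi_norm _ _) (norm_nonneg _) (norm_nonneg _)
      _ = ‖Y 0 ω‖ ^ 2 := (sq ‖Y 0 ω‖).symm
      _ ≤ ‖‖Y 0 ω‖ ^ 2‖ := le_abs_self _
  -- bound partial sums
  have hbound : ∀ (i : Fin (n ^ 2)) (m : ℕ),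
      ∑ k ∈ Finset.range (m + 1), ((Mker ^ k) *ᵥ vker) i
        ≤ ∫ ω, kronPowVec (Y 0 ω) 2 i ∂μ := by
    intro i m
    have h1 : ∑ k ∈ Finset.range (m + 1), ((Mker ^ k) *ᵥ vker) i
        = ∫ ω, ∑ k ∈ Finset.range (m + 1),
            (kronPow (prodA A 0 ω k) 2 *ᵥ kronPowVec (B (-(k : ℤ)) ω) 2) i ∂μ := by
      rw [integral_finset_sum _ fun k _ => (key2 k i).1]
      exact (Finset.sum_congr rfl fun k _ => ((key2 k i).2).symm)
    rw [h1]
    refine integral_mono_ae (integrable_finset_sum _ fun k _ => (key2 k i).1) (hY2int i) ?_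
    filter_upwards [hkron_dom] with ω hω
    exact hω m i
  -- summability in every coordinate
  obtain ⟨i0, hi0⟩ := hpart1
  apply hi0
  have hterm_nonneg : ∀ k, 0 ≤ ((Mker ^ k) *ᵥ vker) i0 := by
    intro k
    simp only [Matrix.mulVec, dotProduct]
    exact Finset.sum_nonneg fun l _ =>
      mul_nonneg (matPow_nonneg hMker_nonneg k i0 l) (hB2pos l).le
  refine summable_of_sum_range_le (c := ∫ ω, kronPowVec (Y 0 ω) 2 i0 ∂μ) hterm_nonneg ?_
  intro m
  calc ∑ k ∈ Finset.range m, ((Mker ^ k) *ᵥ vker) i0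
      ≤ ∑ k ∈ Finset.range (m + 1), ((Mker ^ k) *ᵥ vker) i0 :=
        Finset.sum_le_sum_of_subset_of_nonneg
          (Finset.range_subset_range.2 (Nat.le_succ m)) (fun k _ _ => hterm_nonneg k)
    _ ≤ ∫ ω, kronPowVec (Y 0 ω) 2 i0 ∂μ := hbound i0 m
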